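/- Let p, n, m be natural numbers, and let s : ((Fin p → ℂ) × (Fin n → ℂ)) → (Fin m → ℂ) and φ : ((Fin p → ℂ) × (Fin n → ℂ)) → ℂ be complex-differentiable everywhere. Define w : (Fin p → ℂ) × (Fin n → ℂ) × (Fin n → ℂ) × (Fin m → ℂ) → ℂ by w(y, t, k, e) = Σ_{i : Fin n} k i * t i + Σ_{j : Fin m} e j * (s (y, t)) j + φ(y, t), and w' : (Fin p → ℂ) × (Fin m → ℂ) → ℂ by w'(y, e) = Σ_{j : Fin m} e j * (s (y, 0)) j + φ(y, 0). Then for every point (y, t, k, e) one has fderiv ℂ w (y, t, k, e) = 0 if and only if: t = 0, fderiv ℂ w' (y, e) = 0, and for every i : Fin n, k i = −( Σ_{j} e j * ((fderiv ℂ s (y, 0)) (0, Pi.single i 1)) j + (fderiv ℂ φ (y, 0)) (0, Pi.single i 1) ). Consequently the projection (y, t, k, e) ↦ (y, e) restricts to a bijection from the critical locus {x : fderiv ℂ w x = 0} onto the critical locus {x' : fderiv ℂ w' x' = 0}. -/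

import Mathlib

namespace CritRed

open ContinuousLinearMap Finset



variable {p n m : ℕ}

lemma sum_single (T : Fin n → ℂ) : ∑ i : Fin n, T i • (Pi.single i 1 : Fin n → ℂ) = T := by
  funext j
  simp [Finset.sum_apply, Pi.single_apply]

lemma clm_decomp {W : Type*} [AddCommGroup W] [Module ℂ W] [TopologicalSpace W]
    (D : ((Fin p → ℂ) × (Fin n → ℂ)) →L[ℂ] W) (Y : Fin p → ℂ) (T : Fin n → ℂ) :
    D (Y, T) = D (Y, 0) + ∑ i : Fin n, T i • D (0, (Pi.single i 1 : Fin n → ℂ)) := by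
  have h1 : (Y, T) = ((Y, (0:Fin n → ℂ)) + ((0:Fin p → ℂ), T)) := by simp
  have h2 : ((0:Fin p → ℂ), T)
      = ∑ i : Fin n, T i • ((0:Fin p → ℂ), (Pi.single i 1 : Fin n → ℂ)) := by
    rw [Prod.ext_iff]
    constructor
    · simp [Prod.fst_sum]
    · simp only [Prod.snd_sum, Prod.smul_mk]
      exact (sum_single T).symm
  rw [h1, map_add, h2, map_sum]
  congr 1
  apply Finset.sum_congr rfl
  intro i _
  rw [← map_smul, Prod.smul_mk, smul_zero]





variable {p n m : ℕ}

noncomputable def G (p n m : ℕ) :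
    ((Fin p → ℂ) × (Fin n → ℂ) × (Fin n → ℂ) × (Fin m → ℂ)) →L[ℂ]
      (Fin p → ℂ) × (Fin n → ℂ) :=
  (fst ℂ (Fin p → ℂ) ((Fin n → ℂ) × (Fin n → ℂ) × (Fin m → ℂ))).prod
    ((fst ℂ (Fin n → ℂ) ((Fin n → ℂ) × (Fin m → ℂ))).comp
      (snd ℂ (Fin p → ℂ) ((Fin n → ℂ) × (Fin n → ℂ) × (Fin m → ℂ))))

noncomputable def prT (p n m : ℕ) :
    ((Fin p → ℂ) × (Fin n → ℂ) × (Fin n → ℂ) × (Fin m → ℂ)) →L[ℂ] (Fin n → ℂ) :=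
  (fst ℂ (Fin n → ℂ) ((Fin n → ℂ) × (Fin m → ℂ))).comp
    (snd ℂ (Fin p → ℂ) ((Fin n → ℂ) × (Fin n → ℂ) × (Fin m → ℂ)))

noncomputable def prK (p n m : ℕ) :
    ((Fin p → ℂ) × (Fin n → ℂ) × (Fin n → ℂ) × (Fin m → ℂ)) →L[ℂ] (Fin n → ℂ) :=
  (fst ℂ (Fin n → ℂ) (Fin m → ℂ)).comp
    ((snd ℂ (Fin n → ℂ) ((Fin n → ℂ) × (Fin m → ℂ))).comp
      (snd ℂ (Fin p → ℂ) ((Fin n → ℂ) × (Fin n → ℂ) × (Fin m → ℂ))))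

noncomputable def prE (p n m : ℕ) :
    ((Fin p → ℂ) × (Fin n → ℂ) × (Fin n → ℂ) × (Fin m → ℂ)) →L[ℂ] (Fin m → ℂ) :=
  (snd ℂ (Fin n → ℂ) (Fin m → ℂ)).comp
    ((snd ℂ (Fin n → ℂ) ((Fin n → ℂ) × (Fin m → ℂ))).comp
      (snd ℂ (Fin p → ℂ) ((Fin n → ℂ) × (Fin n → ℂ) × (Fin m → ℂ))))

variable (s : (Fin p → ℂ) × (Fin n → ℂ) → (Fin m → ℂ))
    (φ : (Fin p → ℂ) × (Fin n → ℂ) → ℂ)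

noncomputable def Lw (x : (Fin p → ℂ) × (Fin n → ℂ) × (Fin n → ℂ) × (Fin m → ℂ)) :
    ((Fin p → ℂ) × (Fin n → ℂ) × (Fin n → ℂ) × (Fin m → ℂ)) →L[ℂ] ℂ :=
  (∑ i : Fin n, (x.2.2.1 i • ((proj i).comp (prT p n m))
      + x.2.1 i • ((proj i).comp (prK p n m))))
  + (∑ j : Fin m, (x.2.2.2 j • ((proj j).comp ((fderiv ℂ s (x.1, x.2.1)).comp (G p n m)))
      + s (x.1, x.2.1) j • ((proj j).comp (prE p n m))))
  + (fderiv ℂ φ (x.1, x.2.1)).comp (G p n m)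

lemma Lw_apply (x v : (Fin p → ℂ) × (Fin n → ℂ) × (Fin n → ℂ) × (Fin m → ℂ)) :
    Lw s φ x v =
      (∑ i : Fin n, (x.2.2.1 i * v.2.1 i + x.2.1 i * v.2.2.1 i))
      + (∑ j : Fin m, (x.2.2.2 j * fderiv ℂ s (x.1, x.2.1) (v.1, v.2.1) j
          + s (x.1, x.2.1) j * v.2.2.2 j))
      + fderiv ℂ φ (x.1, x.2.1) (v.1, v.2.1) := by
  simp [Lw, G, prT, prK, prE, ContinuousLinearMap.sum_apply, smul_eq_mul]

lemma hasFDerivAt_w (hs : Differentiable ℂ s) (hφ : Differentiable ℂ φ)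
    (x : (Fin p → ℂ) × (Fin n → ℂ) × (Fin n → ℂ) × (Fin m → ℂ)) :
    HasFDerivAt (fun x => (∑ i : Fin n, x.2.2.1 i * x.2.1 i) +
      (∑ j : Fin m, x.2.2.2 j * s (x.1, x.2.1) j) + φ (x.1, x.2.1)) (Lw s φ x) x := by
  have hG : HasFDerivAt (fun x : (Fin p → ℂ) × (Fin n → ℂ) × (Fin n → ℂ) × (Fin m → ℂ)
      => (x.1, x.2.1)) (G p n m) x := (G p n m).hasFDerivAt
  have h1 : HasFDerivAt (fun x : (Fin p → ℂ) × (Fin n → ℂ) × (Fin n → ℂ) × (Fin m → ℂ)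
      => ∑ i : Fin n, x.2.2.1 i * x.2.1 i)
      (∑ i : Fin n, (x.2.2.1 i • ((proj i).comp (prT p n m))
        + x.2.1 i • ((proj i).comp (prK p n m)))) x := by
    apply HasFDerivAt.fun_sum
    intro i _
    exact (((proj i).comp (prK p n m)).hasFDerivAt).mul (((proj i).comp (prT p n m)).hasFDerivAt)
  have h2 : HasFDerivAt (fun x : (Fin p → ℂ) × (Fin n → ℂ) × (Fin n → ℂ) × (Fin m → ℂ)
      => ∑ j : Fin m, x.2.2.2 j * s (x.1, x.2.1) j)
      (∑ j : Fin m, (x.2.2.2 j • ((proj j).comp ((fderiv ℂ s (x.1, x.2.1)).comp (G p n m)))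
        + s (x.1, x.2.1) j • ((proj j).comp (prE p n m)))) x := by
    apply HasFDerivAt.fun_sum
    intro j _
    have hsj : HasFDerivAt (fun x : (Fin p → ℂ) × (Fin n → ℂ) × (Fin n → ℂ) × (Fin m → ℂ)
        => s (x.1, x.2.1) j)
        ((proj j).comp ((fderiv ℂ s (x.1, x.2.1)).comp (G p n m))) x := by
      exact (proj j).hasFDerivAt.comp x (((hs (x.1, x.2.1)).hasFDerivAt).comp x hG)
    exact (((proj j).comp (prE p n m)).hasFDerivAt).mul hsj
  have h3 : HasFDerivAt (fun x : (Fin p → ℂ) × (Fin n → ℂ) × (Fin n → ℂ) × (Fin m → ℂ)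
      => φ (x.1, x.2.1)) ((fderiv ℂ φ (x.1, x.2.1)).comp (G p n m)) x :=
    ((hφ (x.1, x.2.1)).hasFDerivAt).comp x hG
  exact (h1.add h2).add h3





variable {p n m : ℕ}

noncomputable def G' (p n m : ℕ) :
    ((Fin p → ℂ) × (Fin m → ℂ)) →L[ℂ] (Fin p → ℂ) × (Fin n → ℂ) :=
  (fst ℂ (Fin p → ℂ) (Fin m → ℂ)).prod 0

variable (s : (Fin p → ℂ) × (Fin n → ℂ) → (Fin m → ℂ))
    (φ : (Fin p → ℂ) × (Fin n → ℂ) → ℂ)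

noncomputable def Lw' (x : (Fin p → ℂ) × (Fin m → ℂ)) :
    ((Fin p → ℂ) × (Fin m → ℂ)) →L[ℂ] ℂ :=
  (∑ j : Fin m, (x.2 j • ((proj j).comp ((fderiv ℂ s (x.1, 0)).comp (G' p n m)))
      + s (x.1, 0) j • ((proj j).comp (snd ℂ (Fin p → ℂ) (Fin m → ℂ)))))
  + (fderiv ℂ φ (x.1, 0)).comp (G' p n m)

lemma Lw'_apply (x v : (Fin p → ℂ) × (Fin m → ℂ)) :
    Lw' s φ x v =
      (∑ j : Fin m, (x.2 j * fderiv ℂ s (x.1, 0) (v.1, 0) j + s (x.1, 0) j * v.2 j))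
      + fderiv ℂ φ (x.1, 0) (v.1, 0) := by
  simp [Lw', G', ContinuousLinearMap.sum_apply, smul_eq_mul]

lemma hasFDerivAt_w' (hs : Differentiable ℂ s) (hφ : Differentiable ℂ φ)
    (x : (Fin p → ℂ) × (Fin m → ℂ)) :
    HasFDerivAt (fun x : (Fin p → ℂ) × (Fin m → ℂ)
      => (∑ j : Fin m, x.2 j * s (x.1, 0) j) + φ (x.1, 0)) (Lw' s φ x) x := by
  have hG : HasFDerivAt (fun x : (Fin p → ℂ) × (Fin m → ℂ)
      => (x.1, (0 : Fin n → ℂ))) (G' p n m) x := (G' p n m).hasFDerivAt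
  have h2 : HasFDerivAt (fun x : (Fin p → ℂ) × (Fin m → ℂ)
      => ∑ j : Fin m, x.2 j * s (x.1, 0) j)
      (∑ j : Fin m, (x.2 j • ((proj j).comp ((fderiv ℂ s (x.1, 0)).comp (G' p n m)))
        + s (x.1, 0) j • ((proj j).comp (snd ℂ (Fin p → ℂ) (Fin m → ℂ))))) x := by
    apply HasFDerivAt.fun_sum
    intro j _
    have hsj : HasFDerivAt (fun x : (Fin p → ℂ) × (Fin m → ℂ) => s (x.1, 0) j)
        ((proj j).comp ((fderiv ℂ s (x.1, 0)).comp (G' p n m))) x := by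
      exact (proj j).hasFDerivAt.comp x (((hs (x.1, 0)).hasFDerivAt).comp x hG)
    exact (((proj j).comp (snd ℂ (Fin p → ℂ) (Fin m → ℂ))).hasFDerivAt).mul hsj
  have h3 : HasFDerivAt (fun x : (Fin p → ℂ) × (Fin m → ℂ) => φ (x.1, 0))
      ((fderiv ℂ φ (x.1, 0)).comp (G' p n m)) x :=
    ((hφ (x.1, 0)).hasFDerivAt).comp x hG
  exact h2.add h3


lemma key (s : (Fin p → ℂ) × (Fin n → ℂ) → (Fin m → ℂ))
    (φ : (Fin p → ℂ) × (Fin n → ℂ) → ℂ)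
    (hs : Differentiable ℂ s) (hφ : Differentiable ℂ φ)
    (x : (Fin p → ℂ) × (Fin n → ℂ) × (Fin n → ℂ) × (Fin m → ℂ)) :
    fderiv ℂ (fun x : (Fin p → ℂ) × (Fin n → ℂ) × (Fin n → ℂ) × (Fin m → ℂ) =>
      (∑ i : Fin n, x.2.2.1 i * x.2.1 i) +
      (∑ j : Fin m, x.2.2.2 j * s (x.1, x.2.1) j) + φ (x.1, x.2.1)) x = 0 ↔
    x.2.1 = 0 ∧ fderiv ℂ (fun x : (Fin p → ℂ) × (Fin m → ℂ) =>
        (∑ j : Fin m, x.2 j * s (x.1, 0) j) + φ (x.1, 0)) (x.1, x.2.2.2) = 0 ∧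
      ∀ i : Fin n, x.2.2.1 i =
        -((∑ j : Fin m, x.2.2.2 j * fderiv ℂ s (x.1, 0) (0, Pi.single i 1) j) +
          fderiv ℂ φ (x.1, 0) (0, Pi.single i 1)) := by
  obtain ⟨y, t, k, e⟩ := x
  rw [(hasFDerivAt_w s φ hs hφ (y, t, k, e)).fderiv,
      (hasFDerivAt_w' s φ hs hφ (y, e)).fderiv]
  constructor
  · intro H
    have Hv : ∀ v, Lw s φ (y, t, k, e) v = 0 := by
      intro v; rw [H]; simp
    have Ht : t = 0 := by
      funext i
      have h := Hv (0, 0, Pi.single i 1, 0)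
      rw [Lw_apply] at h
      simpa [Pi.single_apply, Prod.mk_zero_zero] using h
    subst Ht
    refine ⟨rfl, ?_, ?_⟩
    · apply ContinuousLinearMap.ext
      intro v
      obtain ⟨Y, E⟩ := v
      have h := Hv (Y, 0, 0, E)
      rw [Lw_apply] at h
      rw [Lw'_apply]
      simpa using h
    · intro i
      have h := Hv (0, Pi.single i 1, 0, 0)
      rw [Lw_apply] at h
      simp [Pi.single_apply] at h
      show k i = -((∑ j : Fin m, e j * fderiv ℂ s (y, 0) (0, Pi.single i 1) j) +
        fderiv ℂ φ (y, 0) (0, Pi.single i 1))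
      linear_combination h
  · rintro ⟨rfl, H', Hk⟩
    apply ContinuousLinearMap.ext
    intro v
    obtain ⟨Y, T, K, E⟩ := v
    have h1 : (∑ j : Fin m, (e j * fderiv ℂ s (y, 0) (Y, 0) j + s (y, 0) j * E j))
        + fderiv ℂ φ (y, 0) (Y, 0) = 0 := by
      have := ContinuousLinearMap.ext_iff.mp H' (Y, E)
      rw [Lw'_apply] at this
      simpa using this
    have h2 : ∑ i : Fin n, (k i * T i +
        (T i * (∑ j : Fin m, e j * fderiv ℂ s (y, 0) (0, (Pi.single i 1 : Fin n → ℂ)) j)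
          + T i * fderiv ℂ φ (y, 0) (0, (Pi.single i 1 : Fin n → ℂ)))) = 0 := by
      apply Finset.sum_eq_zero
      intro i _
      have hki : k i = -((∑ j : Fin m, e j * fderiv ℂ s (y, 0) (0, Pi.single i 1) j) +
          fderiv ℂ φ (y, 0) (0, Pi.single i 1)) := Hk i
      rw [hki]
      ring
    have h2' : (∑ i : Fin n, k i * T i) +
        ((∑ i : Fin n, T i * (∑ j : Fin m, e j * fderiv ℂ s (y, 0) (0, (Pi.single i 1 : Fin n → ℂ)) j))
          + ∑ i : Fin n, T i * fderiv ℂ φ (y, 0) (0, (Pi.single i 1 : Fin n → ℂ))) = 0 := by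
      rw [← Finset.sum_add_distrib, ← Finset.sum_add_distrib]
      exact h2
    have expand : ∀ j, fderiv ℂ s (y, 0) (Y, T) j = fderiv ℂ s (y, 0) (Y, 0) j
        + ∑ i : Fin n, T i * fderiv ℂ s (y, 0) (0, (Pi.single i 1 : Fin n → ℂ)) j := by
      intro j
      rw [clm_decomp (fderiv ℂ s (y, 0)) Y T]
      simp [Finset.sum_apply]
    have expandφ : fderiv ℂ φ (y, 0) (Y, T) = fderiv ℂ φ (y, 0) (Y, 0)
        + ∑ i : Fin n, T i * fderiv ℂ φ (y, 0) (0, (Pi.single i 1 : Fin n → ℂ)) := by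
      rw [clm_decomp (fderiv ℂ φ (y, 0)) Y T]
      simp
    have step1 : (∑ j : Fin m, (e j * fderiv ℂ s (y, 0) (Y, T) j + s (y, 0) j * E j))
        = (∑ j : Fin m, (e j * fderiv ℂ s (y, 0) (Y, 0) j + s (y, 0) j * E j))
          + ∑ j : Fin m, e j * (∑ i : Fin n,
              T i * fderiv ℂ s (y, 0) (0, (Pi.single i 1 : Fin n → ℂ)) j) := by
      rw [← Finset.sum_add_distrib]
      apply Finset.sum_congr rfl
      intro j _
      rw [expand j]
      ring
    have step2 : (∑ j : Fin m, e j * (∑ i : Fin n,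
          T i * fderiv ℂ s (y, 0) (0, (Pi.single i 1 : Fin n → ℂ)) j))
        = ∑ i : Fin n, T i * (∑ j : Fin m,
            e j * fderiv ℂ s (y, 0) (0, (Pi.single i 1 : Fin n → ℂ)) j) := by
      simp only [Finset.mul_sum]
      rw [Finset.sum_comm]
      apply Finset.sum_congr rfl
      intro i _
      apply Finset.sum_congr rfl
      intro j _
      ring
    rw [Lw_apply]
    simp only [ContinuousLinearMap.zero_apply, Pi.zero_apply, zero_mul, add_zero]
    calc (∑ i : Fin n, k i * T i)
          + (∑ j : Fin m, (e j * fderiv ℂ s (y, 0) (Y, T) j + s (y, 0) j * E j))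
          + fderiv ℂ φ (y, 0) (Y, T)
        = ((∑ j : Fin m, (e j * fderiv ℂ s (y, 0) (Y, 0) j + s (y, 0) j * E j))
            + fderiv ℂ φ (y, 0) (Y, 0))
          + ((∑ i : Fin n, k i * T i) +
            ((∑ i : Fin n, T i * (∑ j : Fin m,
                e j * fderiv ℂ s (y, 0) (0, (Pi.single i 1 : Fin n → ℂ)) j))
              + ∑ i : Fin n, T i * fderiv ℂ φ (y, 0) (0, (Pi.single i 1 : Fin n → ℂ)))) := by
          rw [step1, step2, expandφ]; ring
      _ = 0 := by rw [h1, h2']; ring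

end CritRed


/-- Local-coordinate form of the compatibility of critical loci under dimensional
reduction: for `w (y,t,k,e) = ∑ k i * t i + ∑ e j * s(y,t) j + φ(y,t)` and
`w' (y,e) = ∑ e j * s(y,0) j + φ(y,0)`, a point is critical for `w` iff `t = 0`,
`(y,e)` is critical for `w'`, and `k` is determined by the stated formula; consequently
the projection `(y,t,k,e) ↦ (y,e)` is a bijection from `Crit(w)` onto `Crit(w')`. -/
theorem crit_locus_dimensional_reduction (p n m : ℕ)
    (s : (Fin p → ℂ) × (Fin n → ℂ) → (Fin m → ℂ))
    (φ : (Fin p → ℂ) × (Fin n → ℂ) → ℂ)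
    (hs : Differentiable ℂ s) (hφ : Differentiable ℂ φ)
    (w : (Fin p → ℂ) × (Fin n → ℂ) × (Fin n → ℂ) × (Fin m → ℂ) → ℂ)
    (hw : w = fun x =>
      (∑ i : Fin n, x.2.2.1 i * x.2.1 i) +
      (∑ j : Fin m, x.2.2.2 j * s (x.1, x.2.1) j) + φ (x.1, x.2.1))
    (w' : (Fin p → ℂ) × (Fin m → ℂ) → ℂ)
    (hw' : w' = fun x => (∑ j : Fin m, x.2 j * s (x.1, 0) j) + φ (x.1, 0)) :
    (∀ x : (Fin p → ℂ) × (Fin n → ℂ) × (Fin n → ℂ) × (Fin m → ℂ),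
        fderiv ℂ w x = 0 ↔
          x.2.1 = 0 ∧ fderiv ℂ w' (x.1, x.2.2.2) = 0 ∧
            ∀ i : Fin n, x.2.2.1 i =
              -((∑ j : Fin m, x.2.2.2 j * fderiv ℂ s (x.1, 0) (0, Pi.single i 1) j) +
                fderiv ℂ φ (x.1, 0) (0, Pi.single i 1))) ∧
      Set.BijOn
        (fun x : (Fin p → ℂ) × (Fin n → ℂ) × (Fin n → ℂ) × (Fin m → ℂ) => (x.1, x.2.2.2))
        {x | fderiv ℂ w x = 0} {x' | fderiv ℂ w' x' = 0} := by
  subst hw hw'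
  have K := CritRed.key s φ hs hφ
  refine ⟨K, ?_, ?_, ?_⟩
  · intro x hx
    exact ((K x).mp hx).2.1
  · intro a ha b hb hab
    obtain ⟨ha1, ha2, ha3⟩ := (K a).mp ha
    obtain ⟨hb1, hb2, hb3⟩ := (K b).mp hb
    have hab' : (a.1, a.2.2.2) = (b.1, b.2.2.2) := hab
    have h1 : a.1 = b.1 := (Prod.ext_iff.mp hab').1
    have h2 : a.2.2.2 = b.2.2.2 := (Prod.ext_iff.mp hab').2

    have h3 : a.2.2.1 = b.2.2.1 := by
      funext i
      rw [ha3 i, hb3 i, h1, h2]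
    exact Prod.ext h1 (Prod.ext (ha1.trans hb1.symm) (Prod.ext h3 h2))
  · intro x' hx'
    refine ⟨(x'.1, 0, fun i =>
      -((∑ j : Fin m, x'.2 j * fderiv ℂ s (x'.1, 0) (0, Pi.single i 1) j) +
        fderiv ℂ φ (x'.1, 0) (0, Pi.single i 1)), x'.2), ?_, ?_⟩
    · refine (K _).mpr ⟨rfl, ?_, fun i => rfl⟩
      exact hx'
    · rfl
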